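/- arXiv:1510.05455 — 2 statements merged into one kernel-verified Lean document; each statement's English description precedes it below -/
import Mathlib

section
/- Let v be a radial weight in the class D̂ satisfying ∫₀¹ v̂(s)/(1-s)² ds < ∞. Then sup_{n≥0} (n+1)·v_{2n+1} < ∞, where v_x = ∫₀¹ s^x v(s) ds; consequently there exists C = C(v) > 0 such that every function f analytic on 𝔻 with Taylor coefficients f̂(k) satisfies ‖f‖²_{D_v} ≤ C·(|f̂(0)|² + Σ_{k=1}^∞ k·|f̂(k)|²). -/
open MeasureTheory Real Set Filter

noncomputable section

/-- `hatw v r = ∫_r^1 v(s) ds`. -/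
def hatw (v : ℝ → ℝ) (r : ℝ) : ℝ := ∫ s in r..1, v s

/-- A radial weight: measurable, positive on `[0,1)`, integrable on `(0,1)`. -/
def RadialWeight (v : ℝ → ℝ) : Prop :=
  Measurable v ∧ (∀ r ∈ Set.Ico (0:ℝ) 1, 0 < v r) ∧
    MeasureTheory.IntegrableOn v (Set.Ioo 0 1)

/-- Membership in the class `D̂`. -/
def DoublingD (v : ℝ → ℝ) : Prop :=
  ∃ C : ℝ, 1 ≤ C ∧ ∀ r ∈ Set.Ico (0:ℝ) 1, hatw v r ≤ C * hatw v ((1+r)/2)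

/-- Squared Dirichlet-type norm `‖f‖_{D_v}^2`. -/
def DvSq (v : ℝ → ℝ) (f : ℂ → ℂ) : ENNReal :=
  (‖f 0‖₊ : ENNReal)^2 +
    (ENNReal.ofReal Real.pi)⁻¹ *
      ∫⁻ z in Metric.ball (0:ℂ) 1, (‖deriv f z‖₊ : ENNReal)^2 * ENNReal.ofReal (v ‖z‖)

/-- The Muckenhoupt type quantity `M₁(v)`. -/
def M1v (v : ℝ → ℝ) : ENNReal :=
  ⨆ r ∈ Set.Ioo (0:ℝ) 1,
    (∫⁻ s in Set.Ioo r 1, ENNReal.ofReal (hatw v s / (1-s)^2)) ^ (1/2 : ℝ) *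
    (∫⁻ s in Set.Ioo (0:ℝ) r, ENNReal.ofReal (1 / hatw v s)) ^ (1/2 : ℝ)

/-- The Muckenhoupt type quantity `M₂(v)`. -/
def M2v (v : ℝ → ℝ) : ENNReal :=
  ⨆ r ∈ Set.Ioo (0:ℝ) 1,
    (∫⁻ s in Set.Ioo (0:ℝ) r, ENNReal.ofReal (hatw v s / (1-s)^4)) ^ (1/2 : ℝ) *
    (∫⁻ s in Set.Ioo r 1, ENNReal.ofReal ((1-s)^2 / hatw v s)) ^ (1/2 : ℝ)

/-- The moment `v_x = ∫_0^1 s^x v(s) ds`. -/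
def vx (v : ℝ → ℝ) (x : ℕ) : ℝ := ∫ s in (0:ℝ)..1, s^x * v s

/-- `M_∞(s,f)`, the maximum of `|f|` on the circle of radius `s`. -/
def Minf (f : ℂ → ℂ) (s : ℝ) : ℝ := sSup ((fun z => ‖f z‖) '' Metric.sphere (0:ℂ) s)

/-- `M₂(r,h)`. -/
def M2mean (h : ℂ → ℂ) (r : ℝ) : ℝ :=
  Real.sqrt ((2*Real.pi)⁻¹ * ∫ θ in (-Real.pi)..Real.pi, ‖h ((r:ℂ) * Complex.exp (θ * Complex.I))‖^2)

/-- The norm of `B(2,∞)` (with values in `[0,∞]`). -/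
def B2infE (g : ℂ → ℂ) : ENNReal :=
  (‖g 0‖₊ : ENNReal) +
    ⨆ r ∈ Set.Ioo (0:ℝ) 1, ENNReal.ofReal (M2mean (deriv g) r * Real.sqrt (1-r))

/-- The `p`-th power of the norm of `B(2,p)` (with values in `[0,∞]`). -/
def B2pE (p : ℝ) (g : ℂ → ℂ) : ENNReal :=
  ENNReal.ofReal (‖g 0‖ ^ p) +
    ∫⁻ r in Set.Ioo (0:ℝ) 1, ENNReal.ofReal (M2mean (deriv g) r ^ p * (1-r)^(p/2-1))

/-- The generalized Hilbert operator `H_g`. -/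
def Hg (g f : ℂ → ℂ) (z : ℂ) : ℂ := ∫ t in Set.Ioo (0:ℝ) 1, f t * deriv g (t * z)

/-- The Hilbert operator `H` acting on functions on `[0,1)`. -/
def Hop (φ : ℝ → ℂ) (z : ℂ) : ℂ := ∫ t in Set.Ioo (0:ℝ) 1, φ t / (1 - t * z)

/-- The sublinear Hilbert operator `H̃`. -/
def Htil (φ : ℝ → ℂ) (z : ℂ) : ℂ := ∫ t in Set.Ioo (0:ℝ) 1, (‖φ t‖ : ℂ) / (1 - t * z)

/-- Squared norm in `L²_{V̂₂}`. -/
def L2V2sq (v : ℝ → ℝ) (φ : ℝ → ℂ) : ENNReal :=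
  ∫⁻ t in Set.Ioo (0:ℝ) 1, (‖φ t‖₊ : ENNReal)^2 * ENNReal.ofReal (hatw v t / (1-t)^2)

/-- Taylor coefficient `ĝ(k)` of `g` at the origin. -/
def gcoef (g : ℂ → ℂ) (k : ℕ) : ℂ := iteratedDeriv k g 0 / (Nat.factorial k)




set_option maxHeartbeats 1000000


theorem lintegral_polarCoord_symm (f : ℝ × ℝ → ENNReal) :
    ∫⁻ p in polarCoord.target, ENNReal.ofReal p.1 * f (polarCoord.symm p) = ∫⁻ p, f p := by
  set B : ℝ × ℝ → ℝ × ℝ →L[ℝ] ℝ × ℝ := fun p =>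
    LinearMap.toContinuousLinearMap (Matrix.toLin (Module.Basis.finTwoProd ℝ) (Module.Basis.finTwoProd ℝ)
      !![Real.cos p.2, -p.1 * Real.sin p.2; Real.sin p.2, p.1 * Real.cos p.2])
  have B_det : ∀ p, (B p).det = p.1 := by
    intro p
    conv_rhs => rw [← one_mul p.1, ← cos_sq_add_sin_sq p.2]
    simp only [B, neg_mul, LinearMap.det_toContinuousLinearMap, LinearMap.det_toLin,
      Matrix.det_fin_two_of, sub_neg_eq_add]
    ring
  symm
  calc
    ∫⁻ p, f p = ∫⁻ p in polarCoord.source, f p := by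
      rw [← setLIntegral_univ]
      exact setLIntegral_congr polarCoord_source_ae_eq_univ.symm
    _ = ∫⁻ p in polarCoord.symm '' polarCoord.target, f p := by
      rw [← polarCoord.symm_image_target_eq_source]
    _ = ∫⁻ p in polarCoord.target, ENNReal.ofReal |(B p).det| * f (polarCoord.symm p) := by
      apply lintegral_image_eq_lintegral_abs_det_fderiv_mul volume
        polarCoord.open_target.measurableSet
        (fun p _ => (hasFDerivAt_polarCoord_symm p).hasFDerivWithinAt)
      exact (polarCoord.symm.injOn).mono (by simp [PartialHomeomorph.symm_source])
    _ = ∫⁻ p in polarCoord.target, ENNReal.ofReal p.1 * f (polarCoord.symm p) := by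
      apply setLIntegral_congr_fun polarCoord.open_target.measurableSet
      intro p hp
      dsimp only
      rw [B_det, abs_of_pos hp.1]

theorem Complex.lintegral_polarCoord_symm (f : ℂ → ENNReal) :
    ∫⁻ p in polarCoord.target, ENNReal.ofReal p.1 * f (Complex.polarCoord.symm p) = ∫⁻ z, f z := by
  rw [← (Complex.volume_preserving_equiv_real_prod.symm).lintegral_comp_emb
    Complex.measurableEquivRealProd.symm.measurableEmbedding f,
    ← _root_.lintegral_polarCoord_symm (fun p => f (Complex.measurableEquivRealProd.symm p))]
  rfl

theorem lintegral_ball_polar (g : ℂ → ENNReal) :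
    ∫⁻ z in Metric.ball (0:ℂ) 1, g z
      = ∫⁻ p in (Set.Ioo (0:ℝ) 1) ×ˢ (Set.Ioo (-π) π),
          ENNReal.ofReal p.1 * g (↑p.1 * (Real.cos p.2 + Real.sin p.2 * Complex.I)) := by
  have h1 : ∫⁻ z in Metric.ball (0:ℂ) 1, g z
      = ∫⁻ z, (Metric.ball (0:ℂ) 1).indicator g z := by
    rw [lintegral_indicator Metric.isOpen_ball.measurableSet]
  rw [h1, ← Complex.lintegral_polarCoord_symm]
  rw [polarCoord_target]
  have hsub : (Set.Ioo (0:ℝ) 1) ×ˢ (Set.Ioo (-π) π) ⊆ Set.Ioi (0:ℝ) ×ˢ Set.Ioo (-π) π := by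
    intro p hp; exact ⟨hp.1.1, hp.2⟩
  have key : ∀ p ∈ Set.Ioi (0:ℝ) ×ˢ Set.Ioo (-π) π,
      ENNReal.ofReal p.1 * (Metric.ball (0:ℂ) 1).indicator g (Complex.polarCoord.symm p)
      = ((Set.Ioo (0:ℝ) 1) ×ˢ (Set.Ioo (-π) π)).indicator
          (fun p : ℝ × ℝ => ENNReal.ofReal p.1
            * g (↑p.1 * (Real.cos p.2 + Real.sin p.2 * Complex.I))) p := by
    rintro ⟨r, θ⟩ ⟨hr, hθ⟩
    have habs : ‖Complex.polarCoord.symm (r, θ)‖ = r := by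
      rw [Complex.norm_polarCoord_symm]
      exact abs_of_pos hr
    by_cases h : r < 1
    · rw [Set.indicator_of_mem (mem_ball_zero_iff.mpr (by rw [habs]; exact h)),
        Set.indicator_of_mem (by exact ⟨⟨hr, h⟩, hθ⟩)]
      simp [Complex.polarCoord_symm_apply]
    · rw [Set.indicator_of_notMem (by rw [mem_ball_zero_iff, habs]; exact h),
        Set.indicator_of_notMem (by rintro ⟨⟨_, h1⟩, _⟩; exact h h1)]
      simp
  rw [setLIntegral_congr_fun (measurableSet_Ioi.prod measurableSet_Ioo) key]
  rw [lintegral_indicator (measurableSet_Ioo.prod measurableSet_Ioo), Measure.restrict_restrict (measurableSet_Ioo.prod measurableSet_Ioo)]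
  congr 1
  rw [Set.inter_eq_left.mpr hsub]

lemma integral_exp_int (m : ℤ) :
    ∫ θ in Set.Ioo (-π) π, Complex.exp (m * θ * Complex.I) = if m = 0 then ((2*π:ℝ):ℂ) else 0 := by
  have hle : (-π:ℝ) ≤ π := by linarith [Real.pi_pos]
  have h1 : ∫ θ in Set.Ioo (-π) π, Complex.exp (m * θ * Complex.I)
      = ∫ θ in (-π)..π, Complex.exp (m * θ * Complex.I) := by
    rw [intervalIntegral.integral_of_le hle, integral_Ioc_eq_integral_Ioo]
  rw [h1]
  by_cases hm : m = 0
  · simp [hm]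
    push_cast
    ring
  · rw [if_neg hm]
    have h2 : ∀ θ : ℝ, (m:ℂ) * θ * Complex.I = (m * Complex.I) * θ := by intro θ; ring
    simp_rw [h2]
    rw [integral_exp_mul_complex (by simp [hm, Complex.I_ne_zero])]
    have : Complex.exp (m * Complex.I * π) = Complex.exp (m * Complex.I * (-π)) := by
      have hrw : (m:ℂ) * Complex.I * π = m * Complex.I * (-π) + m * (2 * π * Complex.I) := by ring
      rw [hrw, Complex.exp_add, Complex.exp_int_mul_two_pi_mul_I]
      ring
    rw [this]
    simp

-- geometric-type summability from convergence at a bigger radius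
lemma summable_norm_geom {c : ℕ → ℂ} {r ρ : ℝ} (h : Summable fun k => c k * (ρ:ℂ)^k)
    (h0 : 0 ≤ r) (hrρ : r < ρ) : Summable fun k => ‖c k‖ * r^k := by
  have hρ : 0 < ρ := lt_of_le_of_lt h0 hrρ
  have ht : Tendsto (fun k => ‖c k‖ * ρ^k) atTop (nhds 0) := by
    have := h.tendsto_atTop_zero.norm
    simp only [norm_zero] at this
    refine this.congr fun k => ?_
    rw [norm_mul, norm_pow, Complex.norm_real, Real.norm_eq_abs, abs_of_pos hρ]
  obtain ⟨M, hM⟩ := ht.bddAbove_range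
  refine Summable.of_nonneg_of_le (fun k => mul_nonneg (norm_nonneg _) (pow_nonneg h0 _))
    (fun k => ?_) ((summable_geometric_of_lt_one (div_nonneg h0 hρ.le)
      ((div_lt_one hρ).mpr hrρ)).mul_left M)
  have hk : ‖c k‖ * r^k = (‖c k‖ * ρ^k) * (r/ρ)^k := by
    rw [div_pow, mul_assoc, mul_div_cancel₀ _ (pow_ne_zero _ hρ.ne')]
  rw [hk]
  apply mul_le_mul_of_nonneg_right _ (pow_nonneg (div_nonneg h0 hρ.le) _)
  exact hM ⟨k, rfl⟩

lemma bdd_term {c : ℕ → ℂ} {r : ℝ} (h : Summable fun k => ‖c k‖ * r^k) :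
    ∃ M : ℝ, 0 ≤ M ∧ ∀ k, ‖c k‖ * r^k ≤ M := by
  obtain ⟨M, hM⟩ := h.tendsto_atTop_zero.bddAbove_range
  exact ⟨max M 0, le_max_right _ _, fun k => le_trans (hM ⟨k, rfl⟩) (le_max_left _ _)⟩

lemma summable_sq {c : ℕ → ℂ} {r : ℝ} (h0 : 0 ≤ r) (h : Summable fun k => ‖c k‖ * r^k) :
    Summable fun k => ‖c k‖^2 * r^(2*k) := by
  obtain ⟨M, hM0, hM⟩ := bdd_term h
  refine Summable.of_nonneg_of_le (fun k => mul_nonneg (sq_nonneg _) (pow_nonneg h0 _))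
    (fun k => ?_) (h.mul_left M)
  have : ‖c k‖^2 * r^(2*k) = (‖c k‖ * r^k) * (‖c k‖ * r^k) := by
    rw [pow_mul]; ring
  rw [this]
  exact mul_le_mul_of_nonneg_right (hM k) (mul_nonneg (norm_nonneg _) (pow_nonneg h0 _))

lemma contIntOn {g : ℝ → ℂ} (hg : Continuous g) (a b : ℝ) : IntegrableOn g (Set.Ioo a b) :=
  (hg.integrableOn_Icc).mono_set Set.Ioo_subset_Icc_self

open Complex in
lemma parseval_real (h : ℂ → ℂ) (hcont : ContinuousOn h (Metric.ball 0 1))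
    (c : ℕ → ℂ) (hc : ∀ z ∈ Metric.ball (0:ℂ) 1, HasSum (fun k => c k * z^k) (h z))
    {r : ℝ} (hr : r ∈ Set.Ioo (0:ℝ) 1) :
    ∫ θ in Set.Ioo (-π) π, ‖h (↑r * Complex.exp (↑θ * Complex.I))‖^2
      = 2 * π * ∑' k, ‖c k‖^2 * r^(2*k) := by
  obtain ⟨hr0, hr1⟩ := hr
  set e : ℝ → ℂ := fun θ => ↑r * Complex.exp (↑θ * Complex.I) with he
  have hnorm_e : ∀ θ, ‖e θ‖ = r := by
    intro θ
    simp only [he, norm_mul, Complex.norm_real, Real.norm_eq_abs,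
      Complex.norm_exp_ofReal_mul_I, abs_of_pos hr0, mul_one]
  have he_mem : ∀ θ, e θ ∈ Metric.ball (0:ℂ) 1 := fun θ =>
    mem_ball_zero_iff.mpr (by rw [hnorm_e]; exact hr1)
  have he_cont : Continuous e := by continuity
  -- summability
  have hρ1 : ((r+1)/2 : ℝ) < 1 := by linarith
  have hρ0 : (0:ℝ) < (r+1)/2 := by linarith
  have hmemρ : (((r+1)/2 : ℝ) : ℂ) ∈ Metric.ball (0:ℂ) 1 := by
    rw [mem_ball_zero_iff, Complex.norm_real, Real.norm_eq_abs, abs_of_pos hρ0]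
    exact hρ1
  have hsρ : Summable fun k => c k * (((r+1)/2 : ℝ) : ℂ)^k := (hc _ hmemρ).summable
  have hT : Summable fun k => ‖c k‖ * r^k :=
    summable_norm_geom hsρ hr0.le (by linarith)
  have hsq : Summable fun k => ‖c k‖^2 * r^(2*k) := summable_sq hr0.le hT
  set T : ℝ := ∑' k, ‖c k‖ * r^k with hTdef
  have hterm_norm : ∀ (θ : ℝ) (k : ℕ), ‖c k * (e θ)^k‖ = ‖c k‖ * r^k := by
    intro θ k; rw [norm_mul, norm_pow, hnorm_e]
  have hhb : ∀ θ, ‖h (e θ)‖ ≤ T := by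
    intro θ
    rw [← (hc _ (he_mem θ)).tsum_eq]
    refine le_trans (norm_tsum_le_tsum_norm ?_) (le_of_eq ?_)
    · exact hT.congr fun k => (hterm_norm θ k).symm
    · exact tsum_congr fun k => hterm_norm θ k
  set F : ℕ → ℝ → ℂ := fun N θ => ∑ k ∈ Finset.range N, c k * (e θ)^k with hF
  have hFb : ∀ N θ, ‖F N θ‖ ≤ T := by
    intro N θ
    refine le_trans (norm_sum_le _ _) ?_
    calc ∑ k ∈ Finset.range N, ‖c k * (e θ)^k‖
        = ∑ k ∈ Finset.range N, ‖c k‖ * r^k := by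
          exact Finset.sum_congr rfl fun k _ => hterm_norm θ k
      _ ≤ T := Summable.sum_le_tsum _ (fun k _ => mul_nonneg (norm_nonneg _) (pow_nonneg hr0.le _)) hT
  have hFcont : ∀ N, Continuous (F N) := by
    intro N
    exact continuous_finset_sum _ fun k _ => continuous_const.mul (he_cont.pow k)
  have hT0 : (0:ℝ) ≤ T :=
    tsum_nonneg fun k => mul_nonneg (norm_nonneg _) (pow_nonneg hr0.le _)
  -- Step 1 : dominated convergence
  have step1 : Tendsto (fun N => ∫ θ in Set.Ioo (-π) π, ‖F N θ‖^2) atTop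
      (nhds (∫ θ in Set.Ioo (-π) π, ‖h (e θ)‖^2)) := by
    refine MeasureTheory.tendsto_integral_of_dominated_convergence (fun _ => T^2)
      (fun N => (((hFcont N).norm.pow 2).aestronglyMeasurable)) ?_ ?_ ?_
    · refine integrableOn_const ?_
      exact measure_Ioo_lt_top.ne
    · intro N
      filter_upwards with θ
      simp only [norm_pow, norm_norm]
      exact pow_le_pow_left₀ (norm_nonneg _) (hFb N θ) 2
    · filter_upwards with θ
      exact ((hc _ (he_mem θ)).tendsto_sum_nat.norm.pow 2)
  -- Step 2 : compute the integral of partial sums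
  have key : ∀ j k : ℕ, ∫ θ in Set.Ioo (-π) π,
        (c j * (e θ)^j) * (starRingEnd ℂ) (c k * (e θ)^k)
      = if j = k then (c j * (starRingEnd ℂ) (c j) * ((r:ℂ)^(2*j) * ((2*π:ℝ):ℂ))) else 0 := by
    intro j k
    set m : ℤ := (j:ℤ) - (k:ℤ) with hm
    have hint : ∀ θ : ℝ, (c j * (e θ)^j) * (starRingEnd ℂ) (c k * (e θ)^k)
        = (c j * (starRingEnd ℂ) (c k) * (r:ℂ)^(j+k))
          * Complex.exp ((m:ℂ) * θ * Complex.I) := by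
      intro θ
      have hE : (starRingEnd ℂ) (Complex.exp (↑θ * Complex.I))
          = Complex.exp (-(↑θ * Complex.I)) := by
        rw [← Complex.exp_conj]
        congr 1
        simp [Complex.conj_I]
      have h2 : Complex.exp ((m:ℂ) * θ * Complex.I)
          = Complex.exp (↑θ * Complex.I)^j * Complex.exp (-(↑θ * Complex.I))^k := by
        rw [← Complex.exp_nat_mul, ← Complex.exp_nat_mul, ← Complex.exp_add]
        congr 1
        rw [hm]
        push_cast
        ring
      simp only [he, map_mul, map_pow, Complex.conj_ofReal, hE, mul_pow, h2]
      ring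
    simp_rw [hint]
    rw [MeasureTheory.integral_const_mul, integral_exp_int m]
    by_cases hjk : j = k
    · subst hjk
      rw [if_pos rfl, if_pos (by omega)]
      push_cast
      ring
    · rw [if_neg hjk, if_neg (by omega), mul_zero]
  have step2 : ∀ N, ∫ θ in Set.Ioo (-π) π, ‖F N θ‖^2
      = ∑ k ∈ Finset.range N, 2 * π * (‖c k‖^2 * r^(2*k)) := by
    intro N
    have hco : ((∫ θ in Set.Ioo (-π) π, ‖F N θ‖^2 : ℝ) : ℂ)
        = ∫ θ in Set.Ioo (-π) π, (F N θ * (starRingEnd ℂ) (F N θ)) := by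
      calc ((∫ θ in Set.Ioo (-π) π, ‖F N θ‖^2 : ℝ) : ℂ)
          = ∫ θ in Set.Ioo (-π) π, ((‖F N θ‖^2 : ℝ) : ℂ) := integral_ofReal.symm
        _ = ∫ θ in Set.Ioo (-π) π, (F N θ * (starRingEnd ℂ) (F N θ)) := by
            refine setIntegral_congr_fun measurableSet_Ioo fun θ _ => ?_
            rw [Complex.mul_conj, Complex.normSq_eq_norm_sq]
    have hexp : ∀ θ, F N θ * (starRingEnd ℂ) (F N θ)
        = ∑ j ∈ Finset.range N, ∑ k ∈ Finset.range N,
            (c j * (e θ)^j) * (starRingEnd ℂ) (c k * (e θ)^k) := by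
      intro θ
      rw [hF]
      rw [map_sum, Finset.sum_mul_sum]
    have hintegr : ∀ j k : ℕ, IntegrableOn
        (fun θ => (c j * (e θ)^j) * (starRingEnd ℂ) (c k * (e θ)^k)) (Set.Ioo (-π) π) := by
      intro j k
      apply contIntOn
      exact (continuous_const.mul (he_cont.pow j)).mul
        (continuous_star.comp (continuous_const.mul (he_cont.pow k)))
    have : (∫ θ in Set.Ioo (-π) π, (F N θ * (starRingEnd ℂ) (F N θ)))
        = ∑ j ∈ Finset.range N, ∑ k ∈ Finset.range N, (if j = k
            then (c j * (starRingEnd ℂ) (c j) * ((r:ℂ)^(2*j) * ((2*π:ℝ):ℂ))) else 0) := by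
      simp_rw [hexp]
      rw [MeasureTheory.integral_finset_sum _ (fun j _ => integrable_finset_sum _
        (fun k _ => hintegr j k))]
      refine Finset.sum_congr rfl fun j _ => ?_
      rw [MeasureTheory.integral_finset_sum _ (fun k _ => hintegr j k)]
      exact Finset.sum_congr rfl fun k _ => key j k
    rw [this] at hco
    have hdiag : ∑ j ∈ Finset.range N, ∑ k ∈ Finset.range N, (if j = k
            then (c j * (starRingEnd ℂ) (c j) * ((r:ℂ)^(2*j) * ((2*π:ℝ):ℂ))) else 0)
        = ∑ j ∈ Finset.range N, ((‖c j‖^2 * r^(2*j) * (2*π) : ℝ) : ℂ) := by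
      refine Finset.sum_congr rfl fun j hj => ?_
      rw [Finset.sum_ite_eq (Finset.range N) j
        (fun _ => (c j * (starRingEnd ℂ) (c j) * ((r:ℂ)^(2*j) * ((2*π:ℝ):ℂ))))]
      rw [if_pos hj, Complex.mul_conj, Complex.normSq_eq_norm_sq]
      push_cast
      ring
    rw [hdiag, ← Complex.ofReal_sum] at hco
    have := Complex.ofReal_injective hco
    rw [this]
    refine Finset.sum_congr rfl fun j _ => ?_
    ring
  -- Step 3
  have step3 : Tendsto (fun N => ∑ k ∈ Finset.range N, 2 * π * (‖c k‖^2 * r^(2*k))) atTop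
      (nhds (2 * π * ∑' k, ‖c k‖^2 * r^(2*k))) :=
    ((hsq.hasSum.mul_left (2*π)).tendsto_sum_nat)
  have := tendsto_nhds_unique (step1.congr fun N => (step2 N)) step3
  exact this.symm ▸ rfl

variable {v : ℝ → ℝ}

lemma vnn (hv : RadialWeight v) {t : ℝ} (ht : t ∈ Set.Ico (0:ℝ) 1) :
    0 ≤ᵐ[volume.restrict (Set.Ioo t 1)] v := by
  refine (ae_restrict_iff' measurableSet_Ioo).2 (ae_of_all _ fun s hs => ?_)
  exact (hv.2.1 s ⟨le_trans ht.1 hs.1.le, hs.2⟩).le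

lemma hatw_eq_setIntegral (ht : t ∈ Set.Ico (0:ℝ) 1) :
    hatw v t = ∫ s in Set.Ioo t 1, v s := by
  rw [hatw, intervalIntegral.integral_of_le ht.2.le, MeasureTheory.integral_Ioc_eq_integral_Ioo]

lemma hatw_nonneg (hv : RadialWeight v) {t : ℝ} (ht : t ∈ Set.Ico (0:ℝ) 1) :
    0 ≤ hatw v t := by
  rw [hatw_eq_setIntegral ht]
  exact setIntegral_nonneg_of_ae_restrict (vnn hv ht)

lemma hatw_lint (hv : RadialWeight v) {t : ℝ} (ht : t ∈ Set.Ico (0:ℝ) 1) :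
    ENNReal.ofReal (hatw v t) = ∫⁻ s in Set.Ioo t 1, ENNReal.ofReal (v s) := by
  have hsub : Set.Ioo t 1 ⊆ Set.Ioo 0 1 := fun s hs => ⟨lt_of_le_of_lt ht.1 hs.1, hs.2⟩
  have hint : IntegrableOn v (Set.Ioo t 1) := hv.2.2.mono_set hsub
  rw [hatw_eq_setIntegral ht]
  exact MeasureTheory.ofReal_integral_eq_lintegral_ofReal hint (vnn hv ht)

-- elementary inequality
lemma elem_ineq (n : ℕ) {t : ℝ} (ht : t ∈ Set.Ioo (0:ℝ) 1) :
    ((n:ℝ)+1) * (2*(n:ℝ)+1) * t^(2*n) * (1-t)^2 ≤ 6 := by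
  obtain ⟨ht0, ht1⟩ := ht
  rcases Nat.eq_zero_or_pos n with hn | hn
  · subst hn; norm_num; nlinarith
  · have hn1 : (1:ℝ) ≤ n := by exact_mod_cast hn
    set x : ℝ := 1 - t with hx
    have hx0 : 0 < x := by simp [hx]; linarith
    have hb : (n:ℝ) * x ≤ (1+x)^n := by
      have := one_add_mul_le_pow (a := x) (by linarith) n
      linarith
    have htle : t ≤ 1/(1+x) := by
      rw [le_div_iff₀ (by linarith)]
      nlinarith
    have htn : t^n ≤ 1/(1+x)^n := by
      calc t^n ≤ (1/(1+x))^n := pow_le_pow_left₀ ht0.le htle n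
        _ = 1/(1+x)^n := by rw [div_pow, one_pow]
    have hkey : (n:ℝ) * (t^n * x) ≤ 1 := by
      have h1 : t^n * ((n:ℝ)*x) ≤ (1/(1+x)^n) * ((n:ℝ)*x) :=
        mul_le_mul_of_nonneg_right htn (by positivity)
      have h2 : (1/(1+x)^n) * ((n:ℝ)*x) ≤ 1 := by
        rw [one_div, inv_mul_le_iff₀ (by positivity)]
        linarith
      nlinarith
    have hy0 : 0 ≤ t^n * x := by positivity
    have hpow : t^(2*n) = (t^n)^2 := by rw [← pow_mul, mul_comm]
    rw [hpow]
    have hsq : ((n:ℝ)*(t^n*x))^2 ≤ 1 := by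
      have h0 : 0 ≤ (n:ℝ)*(t^n*x) := by positivity
      nlinarith
    have hn2 : ((n:ℝ)+1)*(2*(n:ℝ)+1) ≤ 6 * (n:ℝ)^2 := by nlinarith
    have hexp : ((n:ℝ)*(t^n*x))^2 = (n:ℝ)^2 * ((t^n)^2 * x^2) := by ring
    nlinarith [sq_nonneg ((t:ℝ)^n), sq_nonneg x, mul_pos (mul_pos ht0 ht0) hx0]



lemma inner_pow_int (n : ℕ) {s : ℝ} (hs : s ∈ Set.Ioo (0:ℝ) 1) :
    ∫⁻ t in Set.Ioo (0:ℝ) s, ENNReal.ofReal ((((n:ℝ)+1) * (2*(n:ℝ)+1)) * t^(2*n))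
      = ENNReal.ofReal (((n:ℝ)+1) * s^(2*n+1)) := by
  have hcont : Continuous (fun t : ℝ => (((n:ℝ)+1) * (2*(n:ℝ)+1)) * t^(2*n)) := by continuity
  have hint : IntegrableOn (fun t : ℝ => (((n:ℝ)+1) * (2*(n:ℝ)+1)) * t^(2*n)) (Set.Ioo 0 s) :=
    (hcont.integrableOn_Icc).mono_set Set.Ioo_subset_Icc_self
  have hnn : 0 ≤ᵐ[volume.restrict (Set.Ioo (0:ℝ) s)]
      (fun t : ℝ => (((n:ℝ)+1) * (2*(n:ℝ)+1)) * t^(2*n)) := by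
    refine (ae_restrict_iff' measurableSet_Ioo).2 (ae_of_all _ fun t ht => ?_)
    have ht0 : (0:ℝ) ≤ t := ht.1.le
    positivity
  rw [← MeasureTheory.ofReal_integral_eq_lintegral_ofReal hint hnn]
  congr 1
  rw [← MeasureTheory.integral_Ioc_eq_integral_Ioo, ← intervalIntegral.integral_of_le hs.1.le]
  rw [intervalIntegral.integral_const_mul, integral_pow]
  rw [zero_pow (by omega), sub_zero]
  field_simp
  push_cast
  ring


lemma moment_bound (hv : RadialWeight v) (n : ℕ) :
    ((n:ENNReal)+1) * ∫⁻ s in Set.Ioo (0:ℝ) 1, ENNReal.ofReal (s^(2*n+1) * v s)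
      ≤ 6 * ∫⁻ s in Set.Ioo (0:ℝ) 1, ENNReal.ofReal (hatw v s / (1-s)^2) := by
  set c : ℝ := ((n:ℝ)+1) * (2*(n:ℝ)+1) with hc
  have hc0 : 0 < c := by positivity
  set g : ℝ → ENNReal := fun t => ENNReal.ofReal (c * t^(2*n)) with hg
  have hgm : Measurable g := by
    apply Measurable.ennreal_ofReal
    exact (measurable_id.pow_const _).const_mul _
  set G : ℝ × ℝ → ENNReal := fun p =>
    ENNReal.ofReal (v p.1) * (if 0 < p.2 ∧ p.2 < p.1 then g p.2 else 0) with hG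
  have hGm : Measurable G := by
    apply Measurable.mul
    · exact (hv.1.comp measurable_fst).ennreal_ofReal
    · apply Measurable.ite _ (hgm.comp measurable_snd) measurable_const
      exact MeasurableSet.inter
        (measurableSet_lt measurable_const measurable_snd)
        (measurableSet_lt measurable_snd measurable_fst)
  -- first evaluation
  have ev1 : ∀ s ∈ Set.Ioo (0:ℝ) 1,
      ∫⁻ t in Set.Ioo (0:ℝ) 1, G (s, t) = ENNReal.ofReal (v s) * ENNReal.ofReal (((n:ℝ)+1) * s^(2*n+1)) := by
    intro s hs
    have h1 : ∀ t ∈ Set.Ioo (0:ℝ) 1, G (s, t)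
        = (Set.Ioo (0:ℝ) s).indicator (fun t => ENNReal.ofReal (v s) * g t) t := by
      intro t ht
      by_cases hts : t < s
      · rw [Set.indicator_of_mem (show t ∈ Set.Ioo (0:ℝ) s from ⟨ht.1, hts⟩), hG]
        simp only
        rw [if_pos (show 0 < t ∧ t < s from ⟨ht.1, hts⟩)]
      · rw [Set.indicator_of_notMem (fun hmem => hts hmem.2), hG]
        simp only
        rw [if_neg (fun hcon : 0 < t ∧ t < s => hts hcon.2), mul_zero]
    rw [setLIntegral_congr_fun measurableSet_Ioo
      h1]
    rw [lintegral_indicator measurableSet_Ioo, Measure.restrict_restrict measurableSet_Ioo]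
    rw [Set.inter_eq_left.mpr (show Set.Ioo (0:ℝ) s ⊆ Set.Ioo (0:ℝ) 1 from fun u hu => ⟨hu.1, lt_trans hu.2 hs.2⟩)]
    rw [lintegral_const_mul _ hgm]
    rw [inner_pow_int n hs]
  -- second evaluation
  have ev2 : ∀ t ∈ Set.Ioo (0:ℝ) 1,
      ∫⁻ s in Set.Ioo (0:ℝ) 1, G (s, t) = g t * ENNReal.ofReal (hatw v t) := by
    intro t ht
    have h1 : ∀ s ∈ Set.Ioo (0:ℝ) 1, G (s, t)
        = (Set.Ioo t 1).indicator (fun s => ENNReal.ofReal (v s) * g t) s := by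
      intro s hs
      by_cases hts : t < s
      · rw [Set.indicator_of_mem (show s ∈ Set.Ioo t 1 from ⟨hts, hs.2⟩), hG]
        simp only
        rw [if_pos (show 0 < t ∧ t < s from ⟨ht.1, hts⟩)]
      · rw [Set.indicator_of_notMem (fun hmem => hts hmem.1), hG]
        simp only
        rw [if_neg (fun hcon : 0 < t ∧ t < s => hts hcon.2), mul_zero]
    rw [setLIntegral_congr_fun measurableSet_Ioo h1]
    rw [lintegral_indicator measurableSet_Ioo, Measure.restrict_restrict measurableSet_Ioo]
    rw [Set.inter_eq_left.mpr (show Set.Ioo t 1 ⊆ Set.Ioo (0:ℝ) 1 from fun u hu => ⟨lt_trans ht.1 hu.1, hu.2⟩)]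
    rw [lintegral_mul_const _ ((hv.1.ennreal_ofReal))]
    rw [← hatw_lint hv ⟨ht.1.le, ht.2⟩, mul_comm]
  -- LHS rewrite
  have lhs_eq : ((n:ENNReal)+1) * (∫⁻ s in Set.Ioo (0:ℝ) 1, ENNReal.ofReal (s^(2*n+1) * v s))
      = ∫⁻ s in Set.Ioo (0:ℝ) 1, ∫⁻ t in Set.Ioo (0:ℝ) 1, G (s, t) := by
    rw [← lintegral_const_mul' _ _ (by simp : ((n:ENNReal)+1) ≠ ⊤)]
    refine setLIntegral_congr_fun measurableSet_Ioo ?_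
    intro s hs
    dsimp only
    have hs0 : (0:ℝ) ≤ s := hs.1.le
    have hv0 : (0:ℝ) ≤ v s := (hv.2.1 s ⟨hs.1.le, hs.2⟩).le
    rw [ev1 s hs]
    rw [← ENNReal.ofReal_mul hv0]
    have hcast : ((n:ENNReal)+1) = ENNReal.ofReal ((n:ℝ)+1) := by
      rw [ENNReal.ofReal_add (by positivity) (by norm_num), ENNReal.ofReal_natCast,
        ENNReal.ofReal_one]
    rw [hcast, ← ENNReal.ofReal_mul (by positivity)]
    congr 1
    ring
  -- swap
  have swap : ∫⁻ s in Set.Ioo (0:ℝ) 1, ∫⁻ t in Set.Ioo (0:ℝ) 1, G (s, t)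
      = ∫⁻ t in Set.Ioo (0:ℝ) 1, ∫⁻ s in Set.Ioo (0:ℝ) 1, G (s, t) :=
    lintegral_lintegral_swap (hGm.aemeasurable)
  rw [lhs_eq, swap]
  -- final bound
  calc ∫⁻ t in Set.Ioo (0:ℝ) 1, ∫⁻ s in Set.Ioo (0:ℝ) 1, G (s, t)
      = ∫⁻ t in Set.Ioo (0:ℝ) 1, g t * ENNReal.ofReal (hatw v t) := by
        exact setLIntegral_congr_fun measurableSet_Ioo ev2
    _ ≤ ∫⁻ t in Set.Ioo (0:ℝ) 1, 6 * ENNReal.ofReal (hatw v t / (1-t)^2) := by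
        refine lintegral_mono_ae ((ae_restrict_iff' measurableSet_Ioo).2 (ae_of_all _ fun t ht => ?_))
        have hh0 : 0 ≤ hatw v t := hatw_nonneg hv ⟨ht.1.le, ht.2⟩
        have h1t : (0:ℝ) < (1-t)^2 := by nlinarith [ht.2]
        have hkey : c * t^(2*n) * hatw v t ≤ 6 * (hatw v t / (1-t)^2) := by
          rw [mul_div_assoc' 6, le_div_iff₀ h1t]
          have h5 : c * t^(2*n) * (1-t)^2 ≤ 6 := by rw [hc]; exact elem_ineq n ht
          calc c * t^(2*n) * hatw v t * (1-t)^2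
              = (c * t^(2*n) * (1-t)^2) * hatw v t := by ring
            _ ≤ 6 * hatw v t := mul_le_mul_of_nonneg_right h5 hh0
        rw [hg]
        simp only
        rw [← ENNReal.ofReal_mul (mul_nonneg hc0.le (pow_nonneg ht.1.le _))]
        calc ENNReal.ofReal (c * t^(2*n) * hatw v t)
            ≤ ENNReal.ofReal (6 * (hatw v t / (1-t)^2)) := ENNReal.ofReal_le_ofReal hkey
          _ = 6 * ENNReal.ofReal (hatw v t / (1-t)^2) := by
              rw [ENNReal.ofReal_mul (by norm_num)]
              norm_num
    _ = 6 * ∫⁻ t in Set.Ioo (0:ℝ) 1, ENNReal.ofReal (hatw v t / (1-t)^2) := by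
        rw [lintegral_const_mul' _ _ (by norm_num)]

lemma parseval_lintegral (h : ℂ → ℂ) (hcont : ContinuousOn h (Metric.ball 0 1))
    (c : ℕ → ℂ) (hc : ∀ z ∈ Metric.ball (0:ℂ) 1, HasSum (fun k => c k * z^k) (h z))
    {r : ℝ} (hr : r ∈ Set.Ioo (0:ℝ) 1) :
    ∫⁻ θ in Set.Ioo (-π) π, ((‖h (↑r * Complex.exp (↑θ * Complex.I))‖₊ : ENNReal))^2
      = ENNReal.ofReal (2 * π * ∑' k, ‖c k‖^2 * r^(2*k)) := by
  have hmem : ∀ θ : ℝ, (↑r * Complex.exp (↑θ * Complex.I)) ∈ Metric.ball (0:ℂ) 1 := by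
    intro θ
    rw [mem_ball_zero_iff, norm_mul, Complex.norm_real, Real.norm_eq_abs,
      abs_of_pos hr.1, Complex.norm_exp_ofReal_mul_I, mul_one]
    exact hr.2
  have hecont : Continuous (fun θ : ℝ => h (↑r * Complex.exp (↑θ * Complex.I))) := by
    refine hcont.comp_continuous (by continuity) hmem
  have hpt : ∀ x : ℂ, ((‖x‖₊ : ENNReal))^2 = ENNReal.ofReal (‖x‖^2) := by
    intro x
    rw [ENNReal.ofReal_pow (norm_nonneg _), ofReal_norm, enorm_eq_nnnorm]
  calc ∫⁻ θ in Set.Ioo (-π) π, ((‖h (↑r * Complex.exp (↑θ * Complex.I))‖₊ : ENNReal))^2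
      = ∫⁻ θ in Set.Ioo (-π) π,
          ENNReal.ofReal (‖h (↑r * Complex.exp (↑θ * Complex.I))‖^2) := by
        simp_rw [hpt]
    _ = ENNReal.ofReal (∫ θ in Set.Ioo (-π) π, ‖h (↑r * Complex.exp (↑θ * Complex.I))‖^2) := by
        refine (MeasureTheory.ofReal_integral_eq_lintegral_ofReal ?_ ?_).symm
        · exact ((hecont.norm.pow 2).integrableOn_Icc).mono_set Set.Ioo_subset_Icc_self
        · exact ae_of_all _ fun θ => by positivity
    _ = ENNReal.ofReal (2 * π * ∑' k, ‖c k‖^2 * r^(2*k)) := by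
        rw [parseval_real h hcont c hc hr]

lemma pow_mul_v_int (hv : RadialWeight v) (k : ℕ) :
    IntegrableOn (fun s => s^k * v s) (Set.Ioo (0:ℝ) 1) := by
  refine Integrable.mono' hv.2.2.abs
    (((measurable_id.pow_const k).mul hv.1).aestronglyMeasurable) ?_
  refine (ae_restrict_iff' measurableSet_Ioo).2 (ae_of_all _ fun s hs => ?_)
  rw [Real.norm_eq_abs, abs_mul]
  have h1 : |s^k| ≤ 1 := by
    rw [abs_pow]
    exact pow_le_one₀ (abs_nonneg _) (by rw [abs_of_pos hs.1]; exact hs.2.le)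
  calc |s^k| * |v s| ≤ 1 * |v s| := mul_le_mul_of_nonneg_right h1 (abs_nonneg _)
    _ = |v s| := one_mul _

lemma vx_nonneg (hv : RadialWeight v) (k : ℕ) : 0 ≤ vx v k := by
  rw [vx, intervalIntegral.integral_of_le zero_le_one,
    MeasureTheory.integral_Ioc_eq_integral_Ioo]
  refine setIntegral_nonneg_of_ae_restrict
    ((ae_restrict_iff' measurableSet_Ioo).2 (ae_of_all _ fun s hs => ?_))
  exact mul_nonneg (pow_nonneg hs.1.le _) (hv.2.1 s ⟨hs.1.le, hs.2⟩).le

lemma vx_lint (hv : RadialWeight v) (k : ℕ) :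
    ENNReal.ofReal (vx v k) = ∫⁻ s in Set.Ioo (0:ℝ) 1, ENNReal.ofReal (s^k * v s) := by
  rw [vx, intervalIntegral.integral_of_le zero_le_one,
    MeasureTheory.integral_Ioc_eq_integral_Ioo]
  refine MeasureTheory.ofReal_integral_eq_lintegral_ofReal (pow_mul_v_int hv k) ?_
  refine (ae_restrict_iff' measurableSet_Ioo).2 (ae_of_all _ fun s hs => ?_)
  exact mul_nonneg (pow_nonneg hs.1.le _) (hv.2.1 s ⟨hs.1.le, hs.2⟩).le

lemma summable_sq' {g : ℂ → ℂ} {c : ℕ → ℂ}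
    (hc : ∀ z ∈ Metric.ball (0:ℂ) 1, HasSum (fun k => c k * z^k) (g z))
    {r : ℝ} (hr : r ∈ Set.Ioo (0:ℝ) 1) : Summable fun k => ‖c k‖^2 * r^(2*k) := by
  have hρ0 : (0:ℝ) < (r+1)/2 := by linarith [hr.1]
  have hmemρ : (((r+1)/2 : ℝ) : ℂ) ∈ Metric.ball (0:ℂ) 1 := by
    rw [mem_ball_zero_iff, Complex.norm_real, Real.norm_eq_abs, abs_of_pos hρ0]
    linarith [hr.2]
  exact summable_sq hr.1.le
    (summable_norm_geom ((hc _ hmemρ).summable) hr.1.le (by linarith [hr.1, hr.2]))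

lemma area_formula (hv : RadialWeight v) (h : ℂ → ℂ)
    (hcont : ContinuousOn h (Metric.ball 0 1)) (c : ℕ → ℂ)
    (hc : ∀ z ∈ Metric.ball (0:ℂ) 1, HasSum (fun k => c k * z^k) (h z)) :
    ∫⁻ z in Metric.ball (0:ℂ) 1, ((‖h z‖₊ : ENNReal))^2 * ENNReal.ofReal (v ‖z‖)
      = ∑' k, ENNReal.ofReal (2 * π * ‖c k‖^2)
          * ∫⁻ s in Set.Ioo (0:ℝ) 1, ENNReal.ofReal (s^(2*k+1) * v s) := by
  set S := (Set.Ioo (0:ℝ) 1) ×ˢ (Set.Ioo (-π) π) with hSdef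
  have hSm : MeasurableSet S := measurableSet_Ioo.prod measurableSet_Ioo
  have hφe : ∀ p : ℝ × ℝ, ((p.1 : ℂ) * (Real.cos p.2 + Real.sin p.2 * Complex.I) : ℂ)
      = (p.1 : ℂ) * Complex.exp ((p.2 : ℂ) * Complex.I) := by
    intro p
    rw [Complex.exp_mul_I, Complex.ofReal_cos, Complex.ofReal_sin]
  have hmem : ∀ p : ℝ × ℝ, p ∈ S → ((p.1 : ℂ) * Complex.exp ((p.2:ℂ) * Complex.I)) ∈ Metric.ball (0:ℂ) 1 := by
    intro p hp
    rw [mem_ball_zero_iff, norm_mul, Complex.norm_real, Real.norm_eq_abs,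
      abs_of_pos hp.1.1, Complex.norm_exp_ofReal_mul_I, mul_one]
    exact hp.1.2
  set g' : ℝ × ℝ → ENNReal := fun p =>
    (ENNReal.ofReal p.1 * ENNReal.ofReal (v p.1))
      * ((‖h ((p.1:ℂ) * Complex.exp ((p.2:ℂ) * Complex.I))‖₊ : ENNReal))^2 with hg'
  have step1 : ∫⁻ z in Metric.ball (0:ℂ) 1, ((‖h z‖₊ : ENNReal))^2 * ENNReal.ofReal (v ‖z‖)
      = ∫⁻ p in S, g' p := by
    rw [lintegral_ball_polar]
    refine setLIntegral_congr_fun hSm ?_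
    intro p hp
    have hnorm : ‖(p.1:ℂ) * (Real.cos p.2 + Real.sin p.2 * Complex.I)‖ = p.1 := by
      rw [hφe, norm_mul, Complex.norm_real, Real.norm_eq_abs, abs_of_pos hp.1.1,
        Complex.norm_exp_ofReal_mul_I, mul_one]
    dsimp only
    rw [hnorm, hφe, hg']
    simp only
    ring
  rw [step1]
  -- product measure
  have hprod : (volume : Measure (ℝ×ℝ)).restrict S
      = ((volume : Measure ℝ).restrict (Set.Ioo 0 1)).prod
          ((volume : Measure ℝ).restrict (Set.Ioo (-π) π)) := by
    rw [hSdef, Measure.volume_eq_prod, Measure.prod_restrict]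
  have hcomp : ContinuousOn (fun p : ℝ×ℝ => h ((p.1:ℂ) * Complex.exp ((p.2:ℂ) * Complex.I))) S :=
    hcont.comp (Continuous.continuousOn (by continuity)) hmem
  have hmeas : AEMeasurable g' (((volume : Measure ℝ).restrict (Set.Ioo 0 1)).prod
      ((volume : Measure ℝ).restrict (Set.Ioo (-π) π))) := by
    rw [← hprod, hg']
    refine AEMeasurable.mul (M := ENNReal) ?_ ?_
    · exact ((measurable_fst.ennreal_ofReal).mul
        ((hv.1.comp measurable_fst).ennreal_ofReal)).aemeasurable
    · exact ((hcomp.aemeasurable hSm).enorm).pow_const 2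
  rw [hprod, lintegral_prod _ hmeas]
  -- inner integral
  have inner_eq : ∀ r ∈ Set.Ioo (0:ℝ) 1,
      (∫⁻ θ in Set.Ioo (-π) π, g' (r, θ))
        = (ENNReal.ofReal r * ENNReal.ofReal (v r))
            * ENNReal.ofReal (2 * π * ∑' k, ‖c k‖^2 * r^(2*k)) := by
    intro r hr
    rw [hg']
    simp only
    rw [lintegral_const_mul' _ _ (ENNReal.mul_ne_top ENNReal.ofReal_ne_top ENNReal.ofReal_ne_top)]
    rw [parseval_lintegral h hcont c hc hr]
  rw [setLIntegral_congr_fun measurableSet_Ioo inner_eq]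
  -- tsum form
  have tsum_eq : ∀ r ∈ Set.Ioo (0:ℝ) 1,
      (ENNReal.ofReal r * ENNReal.ofReal (v r))
          * ENNReal.ofReal (2 * π * ∑' k, ‖c k‖^2 * r^(2*k))
        = ∑' k, ENNReal.ofReal (2 * π * ‖c k‖^2) * ENNReal.ofReal (r^(2*k+1) * v r) := by
    intro r hr
    have hv0 : (0:ℝ) ≤ v r := (hv.2.1 r ⟨hr.1.le, hr.2⟩).le
    have hr0 : (0:ℝ) ≤ r := hr.1.le
    have hsum : Summable fun k => ‖c k‖^2 * r^(2*k) := summable_sq' hc hr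
    have hreal : (r * v r) * (2 * π * ∑' k, ‖c k‖^2 * r^(2*k))
        = ∑' k, (2 * π * ‖c k‖^2) * (r^(2*k+1) * v r) := by
      have h1 : ∀ k : ℕ, (2 * π * ‖c k‖^2) * (r^(2*k+1) * v r)
          = (‖c k‖^2 * r^(2*k)) * (2 * π * (r * v r)) := by
        intro k; ring
      rw [tsum_congr h1, tsum_mul_right]
      ring
    rw [← ENNReal.ofReal_mul hr0, ← ENNReal.ofReal_mul (mul_nonneg hr0 hv0), hreal]
    rw [ENNReal.ofReal_tsum_of_nonneg (fun k => by positivity) ?_]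
    · refine tsum_congr fun k => ?_
      rw [ENNReal.ofReal_mul (by positivity)]
    · refine (hsum.mul_right (2 * π * (r * v r))).congr fun k => ?_
      ring
  rw [setLIntegral_congr_fun measurableSet_Ioo tsum_eq]
  rw [lintegral_tsum (f := fun (k : ℕ) (r : ℝ) => ENNReal.ofReal (2 * π * ‖c k‖^2)
      * ENNReal.ofReal (r^(2*k+1) * v r))
    (fun k => (((measurable_id.pow_const _).mul hv.1).ennreal_ofReal.const_mul _).aemeasurable)]
  refine tsum_congr fun k => ?_
  rw [lintegral_const_mul' _ _ ENNReal.ofReal_ne_top]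


/-- the embedding (3.2): if `v ∈ D̂` and `∫_0^1 v̂(s)/(1-s)² ds < ∞`, then
`sup_n (n+1) v_{2n+1} < ∞` and consequently `B(2,2) ⊂ D_v` with norm estimate. -/
theorem statement17 (v : ℝ → ℝ) (hv : RadialWeight v) (hD : DoublingD v)
    (hint : ∫⁻ s in Set.Ioo (0:ℝ) 1, ENNReal.ofReal (hatw v s / (1-s)^2) < ⊤) :
    (∃ B : ℝ, ∀ n : ℕ, ((n:ℝ) + 1) * vx v (2*n+1) ≤ B) ∧
    ∃ C : ℝ, 0 < C ∧ ∀ f : ℂ → ℂ, DifferentiableOn ℂ f (Metric.ball 0 1) →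
      DvSq v f ≤ ENNReal.ofReal C *
        ((‖gcoef f 0‖₊ : ENNReal)^2 +
          ∑' k : ℕ, ((k : ENNReal) + 1) * (‖gcoef f (k+1)‖₊ : ENNReal)^2) := by
  set I : ENNReal := ∫⁻ s in Set.Ioo (0:ℝ) 1, ENNReal.ofReal (hatw v s / (1-s)^2) with hI
  have hItop : I ≠ ⊤ := hint.ne
  have master : ∀ n : ℕ, ((n:ENNReal)+1) * ENNReal.ofReal (vx v (2*n+1)) ≤ 6 * I := by
    intro n
    rw [vx_lint hv (2*n+1)]
    exact moment_bound hv n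
  constructor
  · refine ⟨6 * I.toReal, fun n => ?_⟩
    have h2 : (((n:ENNReal)+1) * ENNReal.ofReal (vx v (2*n+1))).toReal ≤ (6 * I).toReal :=
      ENNReal.toReal_mono (ENNReal.mul_ne_top (by norm_num) hItop) (master n)
    rw [ENNReal.toReal_mul, ENNReal.toReal_mul, ENNReal.toReal_ofReal (vx_nonneg hv _)] at h2
    have hcast : (((n:ENNReal)+1)).toReal = (n:ℝ)+1 := by
      rw [ENNReal.toReal_add (by simp) (by simp)]
      simp
    rw [hcast] at h2
    have h6 : ((6:ENNReal)).toReal = 6 := by norm_num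
    rw [h6] at h2
    exact h2
  · refine ⟨max 1 (12 * I.toReal), lt_of_lt_of_le one_pos (le_max_left _ _), fun f hf => ?_⟩
    set C : ℝ := max 1 (12 * I.toReal) with hC
    -- power series of deriv f
    have hball : DifferentiableOn ℂ (deriv f) (Metric.ball 0 1) :=
      ((hf.analyticOnNhd Metric.isOpen_ball).deriv).differentiableOn
    have hcont : ContinuousOn (deriv f) (Metric.ball 0 1) := hball.continuousOn
    set co : ℕ → ℂ := fun k => iteratedDeriv k (deriv f) 0 / (Nat.factorial k) with hco
    have hc : ∀ z ∈ Metric.ball (0:ℂ) 1, HasSum (fun k => co k * z^k) (deriv f z) := by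
      intro z hz
      have H := Complex.hasSum_taylorSeries_on_ball hball hz
      have he : (fun n : ℕ => ((n.factorial : ℂ))⁻¹ • (z - 0)^n • iteratedDeriv n (deriv f) 0)
          = fun k => co k * z^k := by
        funext n
        rw [hco]
        simp only [smul_eq_mul, sub_zero, div_eq_mul_inv]
        ring
      rw [← he]
      exact H
    have hgc : ∀ k : ℕ, ‖co k‖^2 = ((k:ℝ)+1)^2 * ‖gcoef f (k+1)‖^2 := by
      intro k
      have hck : co k = ((k:ℂ)+1) * gcoef f (k+1) := by
        rw [hco]
        simp only [gcoef]
        rw [iteratedDeriv_succ']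
        rw [Nat.factorial_succ]
        have hk : ((k:ℂ)+1) ≠ 0 := by
          have := Nat.cast_add_one_ne_zero (R := ℂ) k
          exact_mod_cast this
        have hf0 : ((k.factorial : ℕ) : ℂ) ≠ 0 :=
          Nat.cast_ne_zero.mpr (Nat.factorial_ne_zero k)
        push_cast
        field_simp
      rw [hck, norm_mul, mul_pow]
      congr 2
      have h1 : ((k:ℂ)+1) = (((k+1:ℕ)):ℂ) := by push_cast; ring
      rw [h1, Complex.norm_natCast]
      push_cast
      ring
    -- area estimate
    have hpt : ∀ x : ℂ, ENNReal.ofReal (‖x‖^2) = ((‖x‖₊ : ENNReal))^2 := by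
      intro x
      rw [ENNReal.ofReal_pow (norm_nonneg _), ofReal_norm, enorm_eq_nnnorm]
    set Sa : ENNReal := ∑' k : ℕ, ((k : ENNReal) + 1) * (‖gcoef f (k+1)‖₊ : ENNReal)^2 with hSa
    have hterm_le : ∀ k : ℕ, ENNReal.ofReal (2 * π * ‖co k‖^2)
          * ∫⁻ s in Set.Ioo (0:ℝ) 1, ENNReal.ofReal (s^(2*k+1) * v s)
        ≤ (ENNReal.ofReal (2*π) * (6 * I))
            * (((k : ENNReal) + 1) * (‖gcoef f (k+1)‖₊ : ENNReal)^2) := by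
      intro k
      set Λ : ENNReal := ∫⁻ s in Set.Ioo (0:ℝ) 1, ENNReal.ofReal (s^(2*k+1) * v s) with hΛ
      have hsplit : ENNReal.ofReal (2 * π * ‖co k‖^2)
          = ENNReal.ofReal (2*π) * (((k : ENNReal) + 1)^2 * (‖gcoef f (k+1)‖₊ : ENNReal)^2) := by
        rw [ENNReal.ofReal_mul (by positivity : (0:ℝ) ≤ 2*π), hgc k,
          ENNReal.ofReal_mul (p := ((k:ℝ)+1)^2) (by positivity), hpt]
        congr 2
        rw [ENNReal.ofReal_pow (by positivity)]
        congr 1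
        rw [ENNReal.ofReal_add (by positivity) (by norm_num), ENNReal.ofReal_natCast,
          ENNReal.ofReal_one]
      rw [hsplit]
      calc ENNReal.ofReal (2*π) * (((k : ENNReal) + 1)^2 * (‖gcoef f (k+1)‖₊ : ENNReal)^2) * Λ
          = (ENNReal.ofReal (2*π) * (((k : ENNReal) + 1) * (‖gcoef f (k+1)‖₊ : ENNReal)^2))
              * (((k : ENNReal) + 1) * Λ) := by ring
        _ ≤ (ENNReal.ofReal (2*π) * (((k : ENNReal) + 1) * (‖gcoef f (k+1)‖₊ : ENNReal)^2))
              * (6 * I) := mul_le_mul_right (moment_bound hv k) _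
        _ = (ENNReal.ofReal (2*π) * (6 * I))
              * (((k : ENNReal) + 1) * (‖gcoef f (k+1)‖₊ : ENNReal)^2) := by ring
    have hP : (∫⁻ z in Metric.ball (0:ℂ) 1,
          (‖deriv f z‖₊ : ENNReal)^2 * ENNReal.ofReal (v ‖z‖))
        ≤ (ENNReal.ofReal (2*π) * (6 * I)) * Sa := by
      rw [area_formula hv (deriv f) hcont co hc]
      calc ∑' k, ENNReal.ofReal (2 * π * ‖co k‖^2)
            * ∫⁻ s in Set.Ioo (0:ℝ) 1, ENNReal.ofReal (s^(2*k+1) * v s)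
          ≤ ∑' k : ℕ, (ENNReal.ofReal (2*π) * (6 * I))
              * (((k : ENNReal) + 1) * (‖gcoef f (k+1)‖₊ : ENNReal)^2) :=
            ENNReal.tsum_le_tsum hterm_le
        _ = (ENNReal.ofReal (2*π) * (6 * I)) * Sa := by
            rw [ENNReal.tsum_mul_left]
    have hπinv : (ENNReal.ofReal π)⁻¹ * ENNReal.ofReal (2*π) = 2 := by
      rw [ENNReal.ofReal_mul (by norm_num)]
      rw [← mul_assoc, mul_comm (ENNReal.ofReal π)⁻¹ (ENNReal.ofReal 2), mul_assoc,
        ENNReal.inv_mul_cancel (ENNReal.ofReal_pos.mpr Real.pi_pos).ne' ENNReal.ofReal_ne_top]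
      simp
    have hmain : (ENNReal.ofReal π)⁻¹ * (∫⁻ z in Metric.ball (0:ℂ) 1,
          (‖deriv f z‖₊ : ENNReal)^2 * ENNReal.ofReal (v ‖z‖))
        ≤ (12 * I) * Sa := by
      calc (ENNReal.ofReal π)⁻¹ * (∫⁻ z in Metric.ball (0:ℂ) 1,
              (‖deriv f z‖₊ : ENNReal)^2 * ENNReal.ofReal (v ‖z‖))
          ≤ (ENNReal.ofReal π)⁻¹ * ((ENNReal.ofReal (2*π) * (6 * I)) * Sa) :=
            mul_le_mul_right hP _
        _ = ((ENNReal.ofReal π)⁻¹ * ENNReal.ofReal (2*π)) * ((6 * I) * Sa) := by ring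
        _ = (12 * I) * Sa := by rw [hπinv]; ring
    -- conclusion
    have hg0 : gcoef f 0 = f 0 := by
      simp [gcoef, iteratedDeriv_zero]
    have hC1 : (1:ENNReal) ≤ ENNReal.ofReal C := by
      rw [← ENNReal.ofReal_one]
      exact ENNReal.ofReal_le_ofReal (le_max_left _ _)
    have h12 : (12 : ENNReal) * I ≤ ENNReal.ofReal C := by
      have : (12 : ENNReal) * I = ENNReal.ofReal (12 * I.toReal) := by
        rw [ENNReal.ofReal_mul (by norm_num), ENNReal.ofReal_toReal hItop]
        norm_num
      rw [this]
      exact ENNReal.ofReal_le_ofReal (le_max_right _ _)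
    rw [DvSq, hg0]
    calc (‖f 0‖₊ : ENNReal)^2 + (ENNReal.ofReal π)⁻¹ * (∫⁻ z in Metric.ball (0:ℂ) 1,
            (‖deriv f z‖₊ : ENNReal)^2 * ENNReal.ofReal (v ‖z‖))
        ≤ (‖f 0‖₊ : ENNReal)^2 + (12 * I) * Sa := add_le_add_right hmain _
      _ ≤ ENNReal.ofReal C * (‖f 0‖₊ : ENNReal)^2 + ENNReal.ofReal C * Sa := by
          refine add_le_add ?_ ?_
          · calc (‖f 0‖₊ : ENNReal)^2 = 1 * (‖f 0‖₊ : ENNReal)^2 := (one_mul _).symm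
              _ ≤ ENNReal.ofReal C * (‖f 0‖₊ : ENNReal)^2 := mul_le_mul_left hC1 _
          · exact mul_le_mul_left h12 _
      _ = ENNReal.ofReal C * ((‖f 0‖₊ : ENNReal)^2 + Sa) := by rw [mul_add]

end
end

section
/- Let ω be a radial weight in the class D̂ satisfying sup_{0<r<1} (∫₀^r ω̂(t)/(1-t)² dt)^{1/2} (∫_r¹ 1/ω̂(t) dt)^{1/2} < ∞, and define the radial weight v(r) = (1-r)·ω̂(r). Then v belongs to the class D̂, there are constants 0 < c ≤ C with c·(1-r)²ω̂(r) ≤ v̂(r) ≤ C·(1-r)²ω̂(r) for all r ∈ [0,1), and v satisfies both M₁(v) = sup_{0<r<1} (∫_r¹ v̂(s)/(1-s)² ds)^{1/2} (∫₀^r 1/v̂(s) ds)^{1/2} < ∞ and M₂(v) = sup_{0<r<1} (∫₀^r v̂(s)/(1-s)⁴ ds)^{1/2} (∫_r¹ (1-s)²/v̂(s) ds)^{1/2} < ∞. -/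
open MeasureTheory Real Set Filter

noncomputable section

section Statement19Aux

variable {ω : ℝ → ℝ}

lemma aux_intervalIntegrable (hω : RadialWeight ω) {a b : ℝ}
    (ha : a ∈ Set.Icc (0:ℝ) 1) (hb : b ∈ Set.Icc (0:ℝ) 1) :
    IntervalIntegrable ω volume a b := by
  have h1 : MeasureTheory.IntegrableOn ω (Set.Icc 0 1) :=
    (integrableOn_Icc_iff_integrableOn_Ioo).2 hω.2.2
  exact (h1.mono_set (Set.uIcc_subset_Icc ha hb)).intervalIntegrable

lemma aux_integral_nonneg (hω : RadialWeight ω) {a b : ℝ}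
    (ha : 0 ≤ a) (hab : a ≤ b) (hb : b ≤ 1) : 0 ≤ ∫ s in a..b, ω s := by
  apply intervalIntegral.integral_nonneg_of_ae_restrict hab
  have h1 : ∀ᵐ x : ℝ, x ≠ (1:ℝ) := by
    rw [ae_iff]
    simp only [ne_eq, not_not, Set.setOf_eq_eq_singleton]
    exact measure_singleton 1
  refine (ae_restrict_iff' measurableSet_Icc).2 (h1.mono fun x hx hmem => ?_)
  exact (hω.2.1 x ⟨le_trans ha hmem.1, lt_of_le_of_ne (le_trans hmem.2 hb) hx⟩).le

lemma aux_hatw_split (hω : RadialWeight ω) {a b : ℝ}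
    (ha : 0 ≤ a) (hab : a ≤ b) (hb : b ≤ 1) :
    hatw ω a = (∫ s in a..b, ω s) + hatw ω b := by
  rw [hatw, hatw]
  rw [← intervalIntegral.integral_add_adjacent_intervals
    (aux_intervalIntegrable hω ⟨ha, hab.trans hb⟩ ⟨ha.trans hab, hb⟩)
    (aux_intervalIntegrable hω ⟨ha.trans hab, hb⟩ ⟨zero_le_one, le_refl 1⟩)]

lemma aux_hatw_anti (hω : RadialWeight ω) {a b : ℝ}
    (ha : 0 ≤ a) (hab : a ≤ b) (hb : b ≤ 1) : hatw ω b ≤ hatw ω a := by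
  rw [aux_hatw_split hω ha hab hb]
  linarith [aux_integral_nonneg hω ha hab hb]

lemma aux_hatw_one (ω : ℝ → ℝ) : hatw ω 1 = 0 := by
  rw [hatw, intervalIntegral.integral_same]

lemma aux_hatw_nonneg (hω : RadialWeight ω) {r : ℝ} (h0 : 0 ≤ r) (h1 : r ≤ 1) :
    0 ≤ hatw ω r := by
  have := aux_hatw_anti hω h0 h1 le_rfl
  rwa [aux_hatw_one] at this

lemma aux_hatw_pos (hω : RadialWeight ω) {r : ℝ} (hr : r ∈ Set.Ico (0:ℝ) 1) :
    0 < hatw ω r := by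
  apply intervalIntegral.intervalIntegral_pos_of_pos_on
    (aux_intervalIntegrable hω ⟨hr.1, hr.2.le⟩ ⟨zero_le_one, le_rfl⟩)
    (fun x hx => hω.2.1 x ⟨hr.1.trans hx.1.le, hx.2⟩) hr.2

lemma aux_hatw_measurable (hm : Measurable ω) : Measurable (hatw ω) := by
  have h1 : Measurable fun r : ℝ => ∫ s in Set.Ioc r 1, ω s := by
    have hf : MeasureTheory.StronglyMeasurable fun p : ℝ × ℝ =>
        if p.1 < p.2 ∧ p.2 ≤ 1 then ω p.2 else 0 := by
      refine Measurable.stronglyMeasurable (Measurable.ite ?_ (hm.comp measurable_snd)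
        measurable_const)
      exact (measurableSet_lt measurable_fst measurable_snd).inter
        (measurable_snd measurableSet_Iic)
    have h2 := hf.integral_prod_right' (ν := (volume : Measure ℝ))
    have heq : (fun r : ℝ => ∫ s in Set.Ioc r 1, ω s)
        = fun r : ℝ => ∫ s, (if r < s ∧ s ≤ 1 then ω s else 0) := by
      funext r
      rw [← MeasureTheory.integral_indicator measurableSet_Ioc]
      congr 1
      funext s
      simp [Set.indicator_apply, Set.mem_Ioc]
    rw [heq]
    exact h2.measurable
  have h3 : Measurable fun r : ℝ => ∫ s in Set.Ioc 1 r, ω s := by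
    have hf : MeasureTheory.StronglyMeasurable fun p : ℝ × ℝ =>
        if 1 < p.2 ∧ p.2 ≤ p.1 then ω p.2 else 0 := by
      refine Measurable.stronglyMeasurable (Measurable.ite ?_ (hm.comp measurable_snd)
        measurable_const)
      exact (measurable_snd measurableSet_Ioi).inter
        (measurableSet_le measurable_snd measurable_fst)
    have h2 := hf.integral_prod_right' (ν := (volume : Measure ℝ))
    have heq : (fun r : ℝ => ∫ s in Set.Ioc 1 r, ω s)
        = fun r : ℝ => ∫ s, (if 1 < s ∧ s ≤ r then ω s else 0) := by
      funext r
      rw [← MeasureTheory.integral_indicator measurableSet_Ioc]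
      congr 1
      funext s
      simp [Set.indicator_apply, Set.mem_Ioc]
    rw [heq]
    exact h2.measurable
  have heq : hatw ω = fun r => (∫ s in Set.Ioc r 1, ω s) - ∫ s in Set.Ioc 1 r, ω s := by
    funext r; rfl
  rw [heq]
  exact h1.sub h3

lemma aux_hatw_integrableOn_Icc (hω : RadialWeight ω) :
    MeasureTheory.IntegrableOn (hatw ω) (Set.Icc 0 1) := by
  apply MeasureTheory.Integrable.mono' (g := fun _ : ℝ => hatw ω 0)
  · exact integrableOn_const measure_Icc_lt_top.ne
  · exact (aux_hatw_measurable hω.1).aestronglyMeasurable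
  · refine (ae_restrict_iff' measurableSet_Icc).2 (Filter.Eventually.of_forall fun s hs => ?_)
    rw [Real.norm_eq_abs, abs_of_nonneg (aux_hatw_nonneg hω hs.1 hs.2)]
    exact aux_hatw_anti hω le_rfl hs.1 hs.2

lemma aux_hatw_intervalIntegrable (hω : RadialWeight ω) {a b : ℝ}
    (ha : a ∈ Set.Icc (0:ℝ) 1) (hb : b ∈ Set.Icc (0:ℝ) 1) :
    IntervalIntegrable (hatw ω) volume a b :=
  ((aux_hatw_integrableOn_Icc hω).mono_set (Set.uIcc_subset_Icc ha hb)).intervalIntegrable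

lemma aux_vv_radial (hω : RadialWeight ω) :
    RadialWeight (fun r => (1-r) * hatw ω r) := by
  refine ⟨(measurable_const.sub measurable_id).mul (aux_hatw_measurable hω.1), ?_, ?_⟩
  · intro r hr
    exact mul_pos (by linarith [hr.2]) (aux_hatw_pos hω hr)
  · apply MeasureTheory.Integrable.mono' (g := fun _ : ℝ => hatw ω 0)
    · exact integrableOn_const measure_Ioo_lt_top.ne
    · exact ((measurable_const.sub measurable_id).mul
        (aux_hatw_measurable hω.1)).aestronglyMeasurable
    · refine (ae_restrict_iff' measurableSet_Ioo).2 (Filter.Eventually.of_forall fun s hs => ?_)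
      have hnn := aux_hatw_nonneg hω hs.1.le hs.2.le
      rw [Real.norm_eq_abs, abs_of_nonneg (mul_nonneg (by linarith [hs.2]) hnn)]
      calc (1-s) * hatw ω s ≤ 1 * hatw ω s :=
            mul_le_mul_of_nonneg_right (by linarith [hs.1]) hnn
        _ = hatw ω s := one_mul _
        _ ≤ hatw ω 0 := aux_hatw_anti hω le_rfl hs.1.le hs.2.le

lemma aux_integral_one_sub (a b : ℝ) :
    (∫ s in a..b, (1-s)) = (1-a)^2/2 - (1-b)^2/2 := by
  have hint : ∀ x : ℝ, HasDerivAt (fun s : ℝ => -(1-s)^2/2) (1-x) x := by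
    intro x
    have h1 : HasDerivAt (fun s : ℝ => 1-s) (-1) x := (hasDerivAt_id x).const_sub 1
    have h2 := (h1.pow 2).neg.div_const 2
    refine h2.congr_deriv ?_
    norm_num
  rw [intervalIntegral.integral_eq_sub_of_hasDerivAt (fun x _ => hint x)
    ((continuous_const.sub continuous_id).intervalIntegrable a b)]
  ring

lemma aux_hatvv_upper (hω : RadialWeight ω) {r : ℝ} (h0 : 0 ≤ r) (h1 : r ≤ 1) :
    hatw (fun t => (1-t) * hatw ω t) r ≤ 1/2 * ((1-r)^2 * hatw ω r) := by
  rw [hatw]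
  calc (∫ s in r..1, (1-s) * hatw ω s)
      ≤ ∫ s in r..1, (1-s) * hatw ω r := by
        have hcont : Continuous fun s : ℝ => (1-s) * hatw ω r := by continuity
        apply intervalIntegral.integral_mono_on h1
          (aux_intervalIntegrable (aux_vv_radial hω) ⟨h0, h1⟩ ⟨zero_le_one, le_rfl⟩)
          (hcont.intervalIntegrable r 1)
        intro x hx
        exact mul_le_mul_of_nonneg_left (aux_hatw_anti hω h0 hx.1 hx.2) (by linarith [hx.2])
    _ = 1/2 * ((1-r)^2 * hatw ω r) := by
        rw [show (fun s : ℝ => (1-s) * hatw ω r) = fun s : ℝ => (1-s) * hatw ω r from rfl,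
          intervalIntegral.integral_mul_const, aux_integral_one_sub]
        ring

lemma aux_hatvv_lower (hω : RadialWeight ω) {Cd : ℝ} (hCd1 : 1 ≤ Cd)
    (hCd : ∀ r ∈ Set.Ico (0:ℝ) 1, hatw ω r ≤ Cd * hatw ω ((1+r)/2))
    {r : ℝ} (hr : r ∈ Set.Ico (0:ℝ) 1) :
    3/(8*Cd) * ((1-r)^2 * hatw ω r) ≤ hatw (fun t => (1-t) * hatw ω t) r := by
  have hCd0 : (0:ℝ) < Cd := lt_of_lt_of_le one_pos hCd1
  have hm0 : (0:ℝ) ≤ (1+r)/2 := by linarith [hr.1]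
  have hm1 : (1+r)/2 ≤ 1 := by linarith [hr.2.le]
  have hrm : r ≤ (1+r)/2 := by linarith [hr.2.le]
  have hsplit := aux_hatw_split (aux_vv_radial hω) hr.1 hrm hm1
  have htail : 0 ≤ hatw (fun t => (1-t) * hatw ω t) ((1+r)/2) :=
    aux_hatw_nonneg (aux_vv_radial hω) hm0 hm1
  have hmono : (∫ s in r..(1+r)/2, (1-s) * hatw ω ((1+r)/2))
      ≤ ∫ s in r..(1+r)/2, (1-s) * hatw ω s := by
    have hcont : Continuous fun s : ℝ => (1-s) * hatw ω ((1+r)/2) := by continuity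
    apply intervalIntegral.integral_mono_on hrm
      (hcont.intervalIntegrable _ _)
      (aux_intervalIntegrable (aux_vv_radial hω) ⟨hr.1, hr.2.le⟩ ⟨hm0, hm1⟩)
    intro x hx
    exact mul_le_mul_of_nonneg_left (aux_hatw_anti hω (hr.1.trans hx.1) hx.2 hm1)
      (by linarith [hx.2.trans hm1])
  have hval : (∫ s in r..(1+r)/2, (1-s) * hatw ω ((1+r)/2))
      = 3*(1-r)^2/8 * hatw ω ((1+r)/2) := by
    rw [intervalIntegral.integral_mul_const, aux_integral_one_sub]
    ring
  have hWm : hatw ω r ≤ Cd * hatw ω ((1+r)/2) := hCd r hr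
  have hstep : 3*(1-r)^2/8 * hatw ω ((1+r)/2) ≤ hatw (fun t => (1-t) * hatw ω t) r := by
    rw [hsplit]
    have : (∫ s in r..(1+r)/2, (fun t => (1-t) * hatw ω t) s)
        = ∫ s in r..(1+r)/2, (1-s) * hatw ω s := rfl
    rw [this]
    linarith [hmono, hval]
  have heq : 3/(8*Cd) * ((1-r)^2 * (Cd * hatw ω ((1+r)/2)))
      = 3*(1-r)^2/8 * hatw ω ((1+r)/2) := by
    field_simp
  have hmul := mul_le_mul_of_nonneg_left hWm
    (show (0:ℝ) ≤ 3/(8*Cd) * (1-r)^2 by positivity)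
  nlinarith [hmul, heq, hstep]

lemma aux_ioo_lint_eq (f : ℝ → ℝ) {a b : ℝ}
    (hint : MeasureTheory.IntegrableOn f (Set.Ioo a b))
    (hnn : ∀ x ∈ Set.Ioo a b, 0 ≤ f x) :
    (∫⁻ s in Set.Ioo a b, ENNReal.ofReal (f s)) = ENNReal.ofReal (∫ s in Set.Ioo a b, f s) :=
  (MeasureTheory.ofReal_integral_eq_lintegral_ofReal hint
    ((ae_restrict_iff' measurableSet_Ioo).2 (Filter.Eventually.of_forall hnn))).symm

lemma aux_integral_inv_sq {r : ℝ} (h0 : 0 ≤ r) (hr : r < 1) :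
    (∫ s in (0:ℝ)..r, ((1-s)^2)⁻¹) = (1-r)⁻¹ - 1 := by
  have hco : ContinuousOn (fun s : ℝ => ((1-s)^2)⁻¹) (Set.uIcc 0 r) := by
    apply ContinuousOn.inv₀ ((continuous_const.sub continuous_id).pow 2).continuousOn
    intro x hx
    rw [Set.uIcc_of_le h0] at hx
    exact pow_ne_zero 2 (ne_of_gt (by linarith [hx.2, hr] : (0:ℝ) < 1 - x))
  rw [intervalIntegral.integral_eq_sub_of_hasDerivAt (f := fun s : ℝ => (1-s)⁻¹)
    (f' := fun s : ℝ => ((1-s)^2)⁻¹) ?_ (hco.intervalIntegrable)]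
  · norm_num
  · intro x hx
    rw [Set.uIcc_of_le h0] at hx
    have hx1 : (0:ℝ) < 1 - x := by linarith [hx.2, hr]
    have h1 : HasDerivAt (fun s : ℝ => 1-s) (-1) x := (hasDerivAt_id x).const_sub 1
    have h2 := h1.inv (ne_of_gt hx1)
    refine h2.congr_deriv ?_
    show - -1 / (1-x)^2 = ((1-x)^2)⁻¹
    rw [inv_eq_one_div]
    norm_num

end Statement19Aux


/-- the weight transfer in the proof of Corollary 1.2: if `ω ∈ D̂` satisfies
condition (1.6), then `v(r) = (1-r) ω̂(r)` is a radial weight of class `D̂` with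
`v̂(r) ≍ (1-r)² ω̂(r)`, satisfying both `M₁(v) < ∞` and `M₂(v) < ∞`. -/
theorem statement19 (ω : ℝ → ℝ) (hω : RadialWeight ω) (hD : DoublingD ω)
    (hcond : (⨆ r ∈ Set.Ioo (0:ℝ) 1,
        (∫⁻ t in Set.Ioo (0:ℝ) r, ENNReal.ofReal (hatw ω t / (1-t)^2)) ^ (1/2 : ℝ) *
        (∫⁻ t in Set.Ioo r 1, ENNReal.ofReal (1 / hatw ω t)) ^ (1/2 : ℝ)) < ⊤) :
    RadialWeight (fun r => (1-r) * hatw ω r) ∧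
    DoublingD (fun r => (1-r) * hatw ω r) ∧
    (∃ c C : ℝ, 0 < c ∧ c ≤ C ∧ ∀ r ∈ Set.Ico (0:ℝ) 1,
      c * ((1-r)^2 * hatw ω r) ≤ hatw (fun r => (1-r) * hatw ω r) r ∧
      hatw (fun r => (1-r) * hatw ω r) r ≤ C * ((1-r)^2 * hatw ω r)) ∧
    M1v (fun r => (1-r) * hatw ω r) < ⊤ ∧
    M2v (fun r => (1-r) * hatw ω r) < ⊤ := by
  obtain ⟨Cd, hCd1, hCdle⟩ := hD
  have hCd0 : (0:ℝ) < Cd := lt_of_lt_of_le one_pos hCd1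
  have hvr : RadialWeight (fun r => (1-r) * hatw ω r) := aux_vv_radial hω
  have hdb : DoublingD (fun r => (1-r) * hatw ω r) := by
    refine ⟨16*Cd^2/3, by nlinarith, fun r hr => ?_⟩
    have hm : (1+r)/2 ∈ Set.Ico (0:ℝ) 1 := ⟨by linarith [hr.1], by linarith [hr.2]⟩
    have h1 := aux_hatvv_upper hω hr.1 hr.2.le
    have h2 := aux_hatvv_lower hω hCd1 hCdle hm
    have h3 := hCdle r hr
    have hWm : 0 ≤ hatw ω ((1+r)/2) := aux_hatw_nonneg hω hm.1 hm.2.le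
    have key : (1-(1+r)/2)^2 = (1-r)^2/4 := by ring
    rw [key] at h2
    have h4 := mul_le_mul_of_nonneg_left h2
      (show (0:ℝ) ≤ 16*Cd^2/3 by positivity)
    have heq : 16*Cd^2/3 * (3/(8*Cd) * ((1-r)^2/4 * hatw ω ((1+r)/2)))
        = Cd/2 * ((1-r)^2 * hatw ω ((1+r)/2)) := by
      field_simp
      ring
    rw [heq] at h4
    have h5 := mul_le_mul_of_nonneg_left h3
      (show (0:ℝ) ≤ (1-r)^2/2 by positivity)
    linarith [h1, h4, h5]
  have hequiv : ∃ c C : ℝ, 0 < c ∧ c ≤ C ∧ ∀ r ∈ Set.Ico (0:ℝ) 1,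
      c * ((1-r)^2 * hatw ω r) ≤ hatw (fun r => (1-r) * hatw ω r) r ∧
      hatw (fun r => (1-r) * hatw ω r) r ≤ C * ((1-r)^2 * hatw ω r) := by
    refine ⟨3/(8*Cd), 1/2, by positivity, ?_, fun r hr =>
      ⟨aux_hatvv_lower hω hCd1 hCdle hr, aux_hatvv_upper hω hr.1 hr.2.le⟩⟩
    rw [div_le_iff₀ (by positivity)]
    nlinarith
  have hM1 : M1v (fun r => (1-r) * hatw ω r) < ⊤ := by
    rw [M1v]
    refine lt_of_le_of_lt (iSup₂_le fun r hr => ?_)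
      (show (ENNReal.ofReal (4*Cd/3)) ^ (1/2:ℝ) < ⊤ from
        ENNReal.rpow_lt_top_of_nonneg (by norm_num) ENNReal.ofReal_ne_top)
    have hWr : 0 < hatw ω r := aux_hatw_pos hω ⟨hr.1.le, hr.2⟩
    have h1r : (0:ℝ) < 1 - r := by linarith [hr.2]
    have hX : (∫⁻ s in Set.Ioo r 1,
          ENNReal.ofReal (hatw (fun t => (1-t) * hatw ω t) s / (1-s)^2))
        ≤ ENNReal.ofReal (1/2 * ((1-r) * hatw ω r)) := by
      calc (∫⁻ s in Set.Ioo r 1,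
            ENNReal.ofReal (hatw (fun t => (1-t) * hatw ω t) s / (1-s)^2))
          ≤ ∫⁻ s in Set.Ioo r 1, ENNReal.ofReal (1/2 * hatw ω s) := by
            apply MeasureTheory.setLIntegral_mono' measurableSet_Ioo
            intro s hs
            apply ENNReal.ofReal_le_ofReal
            have h1s : (0:ℝ) < 1 - s := by linarith [hs.2]
            rw [div_le_iff₀ (by positivity)]
            have hu := aux_hatvv_upper hω (le_trans hr.1.le hs.1.le) hs.2.le
            nlinarith [hu]
        _ = ENNReal.ofReal (∫ s in Set.Ioo r 1, 1/2 * hatw ω s) := by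
            apply aux_ioo_lint_eq
            · exact ((aux_hatw_integrableOn_Icc hω).mono_set
                (Set.Ioo_subset_Icc_self.trans (Set.Icc_subset_Icc hr.1.le le_rfl))).const_mul _
            · intro x hx
              have := aux_hatw_nonneg hω (le_trans hr.1.le hx.1.le) hx.2.le
              linarith
        _ ≤ ENNReal.ofReal (1/2 * ((1-r) * hatw ω r)) := by
            apply ENNReal.ofReal_le_ofReal
            rw [← MeasureTheory.integral_Ioc_eq_integral_Ioo,
              ← intervalIntegral.integral_of_le hr.2.le]
            calc (∫ s in r..1, 1/2 * hatw ω s)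
                ≤ ∫ s in r..1, 1/2 * hatw ω r := by
                  apply intervalIntegral.integral_mono_on hr.2.le
                    ((aux_hatw_intervalIntegrable hω ⟨hr.1.le, hr.2.le⟩
                      ⟨zero_le_one, le_rfl⟩).const_mul _)
                    ((continuous_const (y := 1/2 * hatw ω r)).intervalIntegrable r 1)
                  intro x hx
                  exact mul_le_mul_of_nonneg_left
                    (aux_hatw_anti hω hr.1.le hx.1 hx.2) (by norm_num)
              _ = 1/2 * ((1-r) * hatw ω r) := by
                  rw [intervalIntegral.integral_const, smul_eq_mul]
                  ring
    have hY : (∫⁻ s in Set.Ioo (0:ℝ) r,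
          ENNReal.ofReal (1 / hatw (fun t => (1-t) * hatw ω t) s))
        ≤ ENNReal.ofReal ((8*Cd/3 * (hatw ω r)⁻¹) * (1-r)⁻¹) := by
      have hc0 : (0:ℝ) ≤ 8*Cd/3 * (hatw ω r)⁻¹ := by positivity
      calc (∫⁻ s in Set.Ioo (0:ℝ) r,
            ENNReal.ofReal (1 / hatw (fun t => (1-t) * hatw ω t) s))
          ≤ ∫⁻ s in Set.Ioo (0:ℝ) r,
              ENNReal.ofReal ((8*Cd/3 * (hatw ω r)⁻¹) * ((1-s)^2)⁻¹) := by
            apply MeasureTheory.setLIntegral_mono' measurableSet_Ioo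
            intro s hs
            apply ENNReal.ofReal_le_ofReal
            have hs1 : s < 1 := lt_trans hs.2 hr.2
            have h1s : (0:ℝ) < 1 - s := by linarith
            have hWs : hatw ω r ≤ hatw ω s := aux_hatw_anti hω hs.1.le hs.2.le hr.2.le
            have hVlo := aux_hatvv_lower hω hCd1 hCdle ⟨hs.1.le, hs1⟩
            have hlo2 : 3/(8*Cd) * ((1-s)^2 * hatw ω r)
                ≤ hatw (fun t => (1-t) * hatw ω t) s := by
              refine le_trans ?_ hVlo
              exact mul_le_mul_of_nonneg_left
                (mul_le_mul_of_nonneg_left hWs (sq_nonneg _)) (by positivity)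
            have hpos : (0:ℝ) < 3/(8*Cd) * ((1-s)^2 * hatw ω r) := by positivity
            have h6 := one_div_le_one_div_of_le hpos hlo2
            refine h6.trans (le_of_eq ?_)
            field_simp
        _ = ENNReal.ofReal (∫ s in Set.Ioo (0:ℝ) r,
              (8*Cd/3 * (hatw ω r)⁻¹) * ((1-s)^2)⁻¹) := by
            apply aux_ioo_lint_eq
            · have hco : ContinuousOn
                  (fun s : ℝ => (8*Cd/3 * (hatw ω r)⁻¹) * ((1-s)^2)⁻¹) (Set.Icc 0 r) := by
                apply continuousOn_const.mul
                apply ContinuousOn.inv₀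
                  ((continuous_const.sub continuous_id).pow 2).continuousOn
                intro x hx
                exact pow_ne_zero 2 (ne_of_gt (by linarith [hx.2, hr.2] : (0:ℝ) < 1 - x))
              exact (hco.integrableOn_Icc).mono_set Set.Ioo_subset_Icc_self
            · intro x hx
              have h1x : (0:ℝ) < 1 - x := by linarith [hx.2, hr.2]
              positivity
        _ ≤ ENNReal.ofReal ((8*Cd/3 * (hatw ω r)⁻¹) * (1-r)⁻¹) := by
            apply ENNReal.ofReal_le_ofReal
            rw [MeasureTheory.integral_const_mul, ← MeasureTheory.integral_Ioc_eq_integral_Ioo,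
              ← intervalIntegral.integral_of_le hr.1.le, aux_integral_inv_sq hr.1.le hr.2]
            exact mul_le_mul_of_nonneg_left (by linarith [inv_pos.2 h1r]) hc0
    refine le_trans (le_of_eq (ENNReal.mul_rpow_of_nonneg _ _ (by norm_num)).symm) ?_
    refine le_trans (ENNReal.rpow_le_rpow (mul_le_mul' hX hY) (by norm_num)) (le_of_eq ?_)
    rw [← ENNReal.ofReal_mul (mul_nonneg (by norm_num) (mul_nonneg h1r.le hWr.le))]
    congr 1
    field_simp
    ring
  have hM2 : M2v (fun r => (1-r) * hatw ω r) < ⊤ := by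
    rw [M2v]
    set S := ⨆ r ∈ Set.Ioo (0:ℝ) 1,
        (∫⁻ t in Set.Ioo (0:ℝ) r, ENNReal.ofReal (hatw ω t / (1-t)^2)) ^ (1/2:ℝ) *
        (∫⁻ t in Set.Ioo r 1, ENNReal.ofReal (1 / hatw ω t)) ^ (1/2:ℝ) with hS
    have hKfin : (ENNReal.ofReal (1/2)) ^ (1/2:ℝ) * (ENNReal.ofReal (8*Cd/3)) ^ (1/2:ℝ) * S
        < ⊤ :=
      ENNReal.mul_lt_top (ENNReal.mul_lt_top
        (ENNReal.rpow_lt_top_of_nonneg (by norm_num) ENNReal.ofReal_ne_top)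
        (ENNReal.rpow_lt_top_of_nonneg (by norm_num) ENNReal.ofReal_ne_top)) hcond
    refine lt_of_le_of_lt (iSup₂_le fun r hr => ?_) hKfin
    have hP : (∫⁻ s in Set.Ioo (0:ℝ) r,
          ENNReal.ofReal (hatw (fun t => (1-t) * hatw ω t) s / (1-s)^4))
        ≤ ENNReal.ofReal (1/2)
          * ∫⁻ t in Set.Ioo (0:ℝ) r, ENNReal.ofReal (hatw ω t / (1-t)^2) := by
      rw [← MeasureTheory.lintegral_const_mul' _ _ ENNReal.ofReal_ne_top]
      apply MeasureTheory.setLIntegral_mono' measurableSet_Ioo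
      intro s hs
      rw [← ENNReal.ofReal_mul (by norm_num)]
      apply ENNReal.ofReal_le_ofReal
      have hs1 : s < 1 := lt_trans hs.2 hr.2
      have h1s : (0:ℝ) < 1 - s := by linarith
      have hu := aux_hatvv_upper hω hs.1.le hs1.le
      rw [div_le_iff₀ (by positivity)]
      have heq : 1/2 * (hatw ω s/(1-s)^2) * (1-s)^4 = 1/2 * ((1-s)^2 * hatw ω s) := by
        field_simp
      linarith [hu, heq]
    have hQ : (∫⁻ s in Set.Ioo r 1,
          ENNReal.ofReal ((1-s)^2 / hatw (fun t => (1-t) * hatw ω t) s))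
        ≤ ENNReal.ofReal (8*Cd/3)
          * ∫⁻ t in Set.Ioo r 1, ENNReal.ofReal (1 / hatw ω t) := by
      rw [← MeasureTheory.lintegral_const_mul' _ _ ENNReal.ofReal_ne_top]
      apply MeasureTheory.setLIntegral_mono' measurableSet_Ioo
      intro s hs
      rw [← ENNReal.ofReal_mul (div_nonneg (by linarith) (by norm_num))]
      apply ENNReal.ofReal_le_ofReal
      have h1s : (0:ℝ) < 1 - s := by linarith [hs.2]
      have h0s : (0:ℝ) ≤ s := le_trans hr.1.le hs.1.le
      have hWs : 0 < hatw ω s := aux_hatw_pos hω ⟨h0s, hs.2⟩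
      have hVlo := aux_hatvv_lower hω hCd1 hCdle ⟨h0s, hs.2⟩
      have hpos : (0:ℝ) < 3/(8*Cd) * ((1-s)^2 * hatw ω s) := by positivity
      calc (1-s)^2 / hatw (fun t => (1-t) * hatw ω t) s
          ≤ (1-s)^2 / (3/(8*Cd) * ((1-s)^2 * hatw ω s)) :=
            div_le_div_of_nonneg_left (sq_nonneg _) hpos hVlo
        _ = 8*Cd/3 * (1 / hatw ω s) := by
            field_simp
    refine le_trans (mul_le_mul' (ENNReal.rpow_le_rpow hP (by norm_num))
      (ENNReal.rpow_le_rpow hQ (by norm_num))) ?_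
    rw [ENNReal.mul_rpow_of_nonneg _ _ (by norm_num : (0:ℝ) ≤ 1/2),
      ENNReal.mul_rpow_of_nonneg _ _ (by norm_num : (0:ℝ) ≤ 1/2), mul_mul_mul_comm]
    apply mul_le_mul_right
    rw [hS]
    exact le_iSup₂ (f := fun r (_ : r ∈ Set.Ioo (0:ℝ) 1) =>
      (∫⁻ t in Set.Ioo (0:ℝ) r, ENNReal.ofReal (hatw ω t / (1-t)^2)) ^ (1/2:ℝ) *
      (∫⁻ t in Set.Ioo r 1, ENNReal.ofReal (1 / hatw ω t)) ^ (1/2:ℝ)) r hr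
  exact ⟨hvr, hdb, hequiv, hM1, hM2⟩

end
end
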